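/- Let K be a field of characteristic zero, s ≥ 0, R := K⟦u₁,…,u_s⟧ = MvPowerSeries (Fin s) K, k ≥ 2, n := k−1, and let b₁,…,b_k ∈ R((t))⟦x₁,…,x_n⟧ with coefficients c_{i,α} := coeff α bᵢ ∈ R((t)) satisfy: (i) for every i and α, t^{|α|}·c_{i,α} ∈ R⟦t⟧; (ii) for 1 ≤ i ≤ n, c_{i,0} = 0 and c_{i,eⱼ} = 1 if j = i and 0 if j ≠ i; (iii) b_k = −(b₁ + ⋯ + b_n); (iv) for every j = 1,…,k and every α, coeff α (e_j(b₁,…,b_k)) ∈ R⟦t⟧. For each i define supp(bᵢ) := {(α,β) ∈ ℕⁿ × ℤ : the coefficient of t^β in the Laurent series c_{i,α} is a nonzero element of R}, and order ℕⁿ × ℤ by comparing the triples (|α|+β, |α|, α) lexicographically, where α ∈ ℕⁿ is itself compared in the lexicographic order. Then for each 1 ≤ i ≤ n, supp(bᵢ) has a least element, equal to (eᵢ, 0), and supp(b_k) has a least element, equal to (e_n, 0), where eᵢ ∈ ℕⁿ denotes the i-th standard basis vector. -/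

import Mathlib

/-- `j`-th elementary symmetric function of `b 0, …, b (k-1)`:
the sum of all products of `j` of them with distinct indices (`e₀ = 1`). -/
def esym {A : Type*} [CommSemiring A] {k : ℕ} (b : Fin k → A) (j : ℕ) : A :=
  ∑ T ∈ Finset.powersetCard j Finset.univ, ∏ i ∈ T, b i

/-- A Laurent series lies in `R⟦t⟧` iff it has no nonzero coefficients in negative degrees. -/
def memPowerSeries {R : Type*} [CommRing R] (c : LaurentSeries R) : Prop :=
  ∀ m : ℤ, m < 0 → c.coeff m = 0

/-- Lexicographic order on exponents `α ∈ ℕⁿ` (coordinates compared from the first). -/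
def lexLE {n : ℕ} (γ α : Fin n →₀ ℕ) : Prop :=
  γ = α ∨ ∃ j : Fin n, (∀ l : Fin n, l < j → γ l = α l) ∧ γ j < α j

/-- The ordering `lex (|α| + β, |α|, α)` on `ℕⁿ × ℤ` from the proof of Lemma 4.1. -/
def keyLE {n : ℕ} (q q' : (Fin n →₀ ℕ) × ℤ) : Prop :=
  ((∑ l, q.1 l : ℕ) + q.2 < (∑ l, q'.1 l : ℕ) + q'.2) ∨
    ((∑ l, q.1 l : ℕ) + q.2 = (∑ l, q'.1 l : ℕ) + q'.2 ∧
      ((∑ l, q.1 l) < (∑ l, q'.1 l) ∨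
        ((∑ l, q.1 l) = (∑ l, q'.1 l) ∧ lexLE q.1 q'.1)))

/-- The support of `bᵢ ∈ R((t))⟦x⟧`: pairs `(α, β)` such that the coefficient of
`t^β` in the Laurent series `coeff α bᵢ` is nonzero. -/
def suppOf {R : Type*} [CommRing R] {n : ℕ}
    (F : MvPowerSeries (Fin n) (LaurentSeries R)) : Set ((Fin n →₀ ℕ) × ℤ) :=
  {q | (MvPowerSeries.coeff q.1 F).coeff q.2 ≠ 0}

section Aux

open Finset

namespace Lemma41

variable {R : Type*} [CommRing R] {n : ℕ}

/-- total degree of a multi-exponent -/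
def deg {n : ℕ} (α : Fin n →₀ ℕ) : ℕ := ∑ l, α l

theorem deg_add (α β : Fin n →₀ ℕ) : deg (α + β) = deg α + deg β := by
  simp [deg, Finsupp.add_apply, Finset.sum_add_distrib]

theorem deg_eq_zero {α : Fin n →₀ ℕ} (h : deg α = 0) : α = 0 := by
  ext l
  simpa using Finset.sum_eq_zero_iff.mp h l (Finset.mem_univ l)

theorem deg_single (j : Fin n) : deg (Finsupp.single j 1) = 1 := by
  simp [deg, Finsupp.single_apply]

theorem deg_eq_one {α : Fin n →₀ ℕ} (h : deg α = 1) : ∃ j, α = Finsupp.single j 1 := by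
  have hne : ∃ j, α j ≠ 0 := by
    by_contra hc
    push_neg at hc
    have : α = 0 := by ext l; simp [hc]
    rw [this] at h
    simp [deg] at h
  obtain ⟨j, hj⟩ := hne
  refine ⟨j, ?_⟩
  have hsplit : α j + ∑ l ∈ Finset.univ.erase j, α l = 1 := by
    rw [Finset.add_sum_erase _ _ (Finset.mem_univ j)]; exact h
  have hαj : α j = 1 := by omega
  have hrest : ∑ l ∈ Finset.univ.erase j, α l = 0 := by omega
  ext l
  by_cases hl : l = j
  · subst hl; simp [hαj, Finsupp.single_apply]
  · have : α l = 0 :=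
      Finset.sum_eq_zero_iff.mp hrest l (Finset.mem_erase.mpr ⟨hl, Finset.mem_univ l⟩)
    simp [this, Finsupp.single_apply, Ne.symm hl]

theorem laurent_mul_coeff_min (c d : LaurentSeries R) (a b : ℤ)
    (hc : ∀ m : ℤ, m < a → c.coeff m = 0) (hd : ∀ m : ℤ, m < b → d.coeff m = 0) :
    (c * d).coeff (a + b) = c.coeff a * d.coeff b := by
  rw [HahnSeries.coeff_mul]
  refine Finset.sum_eq_single (a, b) ?_ ?_
  · rintro ⟨i, j⟩ hmem hne
    rw [Finset.mem_addAntidiagonal] at hmem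
    obtain ⟨h1, h2, h3⟩ := hmem
    rw [HahnSeries.mem_support] at h1 h2
    by_cases hia : i < a
    · exact absurd (hc i hia) h1
    by_cases hjb : j < b
    · exact absurd (hd j hjb) h2
    exfalso
    apply hne
    have hi : i = a := by omega
    have hj : j = b := by omega
    simp [hi, hj]
  · intro hnot
    rw [Finset.mem_addAntidiagonal] at hnot
    push_neg at hnot
    by_cases h1 : c.coeff a = 0
    · rw [h1, zero_mul]
    by_cases h2 : d.coeff b = 0
    · rw [h2, mul_zero]
    exact absurd rfl (hnot (HahnSeries.mem_support c a |>.mpr h1)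
      (HahnSeries.mem_support d b |>.mpr h2))

theorem laurent_mul_coeff_zero (c d : LaurentSeries R) (a b : ℤ)
    (hc : ∀ m : ℤ, m < a → c.coeff m = 0) (hd : ∀ m : ℤ, m < b → d.coeff m = 0)
    (m : ℤ) (hm : m < a + b) : (c * d).coeff m = 0 := by
  rw [HahnSeries.coeff_mul]
  refine Finset.sum_eq_zero ?_
  rintro ⟨i, j⟩ hmem
  rw [Finset.mem_addAntidiagonal] at hmem
  obtain ⟨h1, h2, h3⟩ := hmem
  rw [HahnSeries.mem_support] at h1 h2
  by_cases hia : i < a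
  · exact absurd (hc i hia) h1
  by_cases hjb : j < b
  · exact absurd (hd j hjb) h2
  omega

theorem hahn_sum_coeff {ι : Type*} (S : Finset ι) (f : ι → LaurentSeries R) (m : ℤ) :
    (∑ i ∈ S, f i).coeff m = ∑ i ∈ S, (f i).coeff m :=
  map_sum (HahnSeries.coeff.addMonoidHom m) f S

/-- "no pole worse than `t^{-|α|}`" property -/
def Good (F : MvPowerSeries (Fin n) (LaurentSeries R)) : Prop :=
  ∀ (α : Fin n →₀ ℕ) (m : ℤ), m < -(deg α : ℤ) →
    (MvPowerSeries.coeff α F).coeff m = 0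

/-- weight-zero part -/
noncomputable def W0 (F : MvPowerSeries (Fin n) (LaurentSeries R)) : MvPowerSeries (Fin n) R :=
  fun α => (MvPowerSeries.coeff α F).coeff (-(deg α : ℤ))

theorem Good.mul {F G : MvPowerSeries (Fin n) (LaurentSeries R)}
    (hF : Good F) (hG : Good G) : Good (F * G) := by
  intro α m hm
  classical
  rw [MvPowerSeries.coeff_mul, hahn_sum_coeff]
  refine Finset.sum_eq_zero fun p hp => ?_
  have hpa := Finset.HasAntidiagonal.mem_antidiagonal.mp hp
  have hdeg : deg p.1 + deg p.2 = deg α := by rw [← hpa, deg_add]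
  refine laurent_mul_coeff_zero _ _ _ _ (hF p.1) (hG p.2) m ?_
  omega

theorem Good.one : Good (1 : MvPowerSeries (Fin n) (LaurentSeries R)) := by
  intro α m hm
  classical
  rw [MvPowerSeries.coeff_one]
  split_ifs with h
  · subst h
    simp [deg] at hm
    rw [HahnSeries.coeff_one, if_neg (by omega)]
  · simp

theorem W0_mul {F G : MvPowerSeries (Fin n) (LaurentSeries R)}
    (hF : Good F) (hG : Good G) : W0 (F * G) = W0 F * W0 G := by
  classical
  funext α
  have h2 : (W0 F * W0 G) α = ∑ p ∈ Finset.HasAntidiagonal.antidiagonal α,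
      (MvPowerSeries.coeff p.1 F).coeff (-(deg p.1 : ℤ)) *
      (MvPowerSeries.coeff p.2 G).coeff (-(deg p.2 : ℤ)) := by
    show MvPowerSeries.coeff α (W0 F * W0 G) = _
    rw [MvPowerSeries.coeff_mul]
    rfl
  rw [h2]
  show (MvPowerSeries.coeff α (F * G)).coeff (-(deg α : ℤ)) = _
  rw [MvPowerSeries.coeff_mul, hahn_sum_coeff]
  refine Finset.sum_congr rfl fun p hp => ?_
  have hpa := Finset.HasAntidiagonal.mem_antidiagonal.mp hp
  have hdeg : deg p.1 + deg p.2 = deg α := by rw [← hpa, deg_add]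
  have heq : (-(deg α : ℤ)) = (-(deg p.1 : ℤ)) + (-(deg p.2 : ℤ)) := by
    rw [← hdeg]; push_cast; ring
  rw [heq]
  exact laurent_mul_coeff_min _ _ _ _ (hF p.1) (hG p.2)

theorem W0_one : W0 (1 : MvPowerSeries (Fin n) (LaurentSeries R)) = 1 := by
  classical
  funext α
  show (MvPowerSeries.coeff α (1 : MvPowerSeries (Fin n) (LaurentSeries R))).coeff (-(deg α : ℤ)) =
    MvPowerSeries.coeff α (1 : MvPowerSeries (Fin n) R)
  rw [MvPowerSeries.coeff_one, MvPowerSeries.coeff_one]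
  split_ifs with h
  · subst h
    simp [deg, HahnSeries.coeff_one]
  · simp

theorem W0_sum {ι : Type*} (S : Finset ι) (f : ι → MvPowerSeries (Fin n) (LaurentSeries R)) :
    W0 (∑ i ∈ S, f i) = ∑ i ∈ S, W0 (f i) := by
  funext α
  show ((MvPowerSeries.coeff α) (∑ i ∈ S, f i)).coeff (-(deg α : ℤ)) = _
  rw [map_sum, hahn_sum_coeff]
  rw [show (∑ i ∈ S, W0 (f i)) α = ∑ i ∈ S, W0 (f i) α from Finset.sum_apply α S _]
  rfl

theorem good_prod_W0 {k : ℕ} (b : Fin k → MvPowerSeries (Fin n) (LaurentSeries R))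
    (hb : ∀ i, Good (b i)) (T : Finset (Fin k)) :
    Good (∏ i ∈ T, b i) ∧ W0 (∏ i ∈ T, b i) = ∏ i ∈ T, W0 (b i) := by
  classical
  induction T using Finset.induction_on with
  | empty => simpa using ⟨Good.one, W0_one⟩
  | insert _ _ h ih =>
      rw [Finset.prod_insert h, Finset.prod_insert h]
      exact ⟨(hb _).mul ih.1, by rw [W0_mul (hb _) ih.1, ih.2]⟩

end Lemma41

end Aux

namespace Lemma41

open Finset

theorem pow_eq_zero_of_esym {A : Type*} [CommRing A] {k : ℕ} (_hk : k ≠ 0)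
    (β : Fin k → A) (hesym : ∀ j, 1 ≤ j → j ≤ k → esym β j = 0) (m : Fin k) :
    β m ^ k = 0 := by
  classical
  have h0 : (0 : A) = ∏ i : Fin k, (-β i + β m) :=
    (Finset.prod_eq_zero (Finset.mem_univ m) (by ring)).symm
  rw [Finset.prod_add] at h0
  have key : ∑ T ∈ (Finset.univ : Finset (Fin k)).powerset,
      (∏ i ∈ T, -β i) * ∏ i ∈ Finset.univ \ T, β m = β m ^ k := by
    rw [Finset.sum_powerset]
    rw [Finset.sum_eq_single 0]
    · rw [Finset.powersetCard_zero, Finset.sum_singleton]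
      simp [Finset.card_univ]
    · intro j hj hj0
      rw [Finset.mem_range, Finset.card_univ, Fintype.card_fin] at hj
      have hsym := hesym j (by omega) (by omega)
      have hterm : ∀ T ∈ Finset.powersetCard j (Finset.univ : Finset (Fin k)),
          (∏ i ∈ T, -β i) * ∏ i ∈ Finset.univ \ T, β m
          = (-1 : A) ^ j * ((∏ i ∈ T, β i) * β m ^ (k - j)) := by
        intro T hT
        obtain ⟨hTsub, hTcard⟩ := Finset.mem_powersetCard.mp hT
        rw [Finset.prod_const, Finset.card_sdiff_of_subset hTsub, Finset.card_univ, Fintype.card_fin,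
          hTcard]
        have hneg : ∏ i ∈ T, -β i = (-1 : A) ^ j * ∏ i ∈ T, β i := by
          rw [← hTcard, ← Finset.prod_const, ← Finset.prod_mul_distrib]
          simp
        rw [hneg, mul_assoc]
      rw [Finset.sum_congr rfl hterm, ← Finset.mul_sum, ← Finset.sum_mul]
      rw [show (∑ T ∈ Finset.powersetCard j Finset.univ, ∏ i ∈ T, β i) = esym β j from rfl,
        hsym]
      ring
    · intro h
      exact absurd (Finset.mem_range.mpr (by omega)) h
  rw [key] at h0
  exact h0.symm

variable {R : Type*} [CommRing R] {n : ℕ}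

theorem minimal_supp (F : MvPowerSeries (Fin n) (LaurentSeries R)) (hG : Good F)
    (hW : ∀ α : Fin n →₀ ℕ, (MvPowerSeries.coeff α F).coeff (-(deg α : ℤ)) = 0)
    (hF0 : MvPowerSeries.coeff 0 F = 0) (i₀ : Fin n)
    (hlex : ∀ j : Fin n,
      (MvPowerSeries.coeff (Finsupp.single j 1) F).coeff 0 ≠ 0 →
      lexLE (Finsupp.single i₀ 1) (Finsupp.single j 1)) :
    ∀ q ∈ suppOf F, keyLE (Finsupp.single i₀ 1, (0 : ℤ)) q := by
  rintro ⟨α, m⟩ hq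
  have hq' : (MvPowerSeries.coeff α F).coeff m ≠ 0 := hq
  have hw0 : -(deg α : ℤ) ≤ m := by
    by_contra h
    exact hq' (hG α m (by omega))
  rcases lt_trichotomy ((deg α : ℤ) + m) 1 with h | h | h
  · exfalso
    have hm : m = -(deg α : ℤ) := by omega
    exact hq' (hm ▸ hW α)
  · by_cases hD : deg α = 0
    · exfalso
      rw [deg_eq_zero hD, hF0] at hq'
      exact hq' HahnSeries.coeff_zero
    · by_cases hD1 : deg α = 1
      · obtain ⟨j, hj⟩ := deg_eq_one hD1
        have hm : m = 0 := by omega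
        refine Or.inr ⟨?_, Or.inr ⟨?_, ?_⟩⟩
        · show ((deg (Finsupp.single i₀ 1) : ℕ) : ℤ) + 0 = ((deg α : ℕ) : ℤ) + m
          rw [deg_single]; omega
        · show deg (Finsupp.single i₀ 1) = deg α
          rw [deg_single, hD1]
        · show lexLE (Finsupp.single i₀ 1) α
          rw [hj]
          exact hlex j (by rw [← hj, ← hm]; exact hq')
      · refine Or.inr ⟨?_, Or.inl ?_⟩
        · show ((deg (Finsupp.single i₀ 1) : ℕ) : ℤ) + 0 = ((deg α : ℕ) : ℤ) + m
          rw [deg_single]; omega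
        · show deg (Finsupp.single i₀ 1) < deg α
          rw [deg_single]; omega
  · refine Or.inl ?_
    show ((deg (Finsupp.single i₀ 1) : ℕ) : ℤ) + 0 < ((deg α : ℕ) : ℤ) + m
    rw [deg_single]; omega

end Lemma41


/-- The Claim in the proof of Lemma 4.1: under the hypotheses of the lemma, with
respect to the ordering `lex (|α|+β, |α|, α)`, the least element of the support
of `bᵢ` is `(eᵢ, 0)` for `i = 1, …, k−1`, and the least element of the support of
`b_k` is `(e_{k−1}, 0)`. -/
theorem lemma_claim_least_support
    (K : Type*) [Field K] [CharZero K] (s k n : ℕ) (hk : 2 ≤ k) (hn : n = k - 1)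
    (b : Fin k → MvPowerSeries (Fin n) (LaurentSeries (MvPowerSeries (Fin s) K)))
    (hsupp : ∀ (i : Fin k) (α : Fin n →₀ ℕ),
      memPowerSeries
        (HahnSeries.single (((∑ l, α l) : ℕ) : ℤ) (1 : MvPowerSeries (Fin s) K) *
          MvPowerSeries.coeff α (b i)))
    (hlin : ∀ i : Fin n,
      MvPowerSeries.coeff 0
          (b (Fin.castLE (by omega) i)) = 0 ∧
      ∀ j : Fin n,
        MvPowerSeries.coeff (Finsupp.single j 1)
            (b (Fin.castLE (by omega) i)) = if j = i then 1 else 0)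
    (hsum : b ⟨k - 1, by omega⟩ = -(∑ i : Fin n, b (Fin.castLE (by omega) i)))
    (hesymm : ∀ j, 1 ≤ j → j ≤ k → ∀ α : Fin n →₀ ℕ,
      memPowerSeries
        (MvPowerSeries.coeff α (esym b j))) :
    (∀ i : Fin n,
      (Finsupp.single i 1, (0 : ℤ)) ∈ suppOf (b (Fin.castLE (by omega) i)) ∧
      ∀ q ∈ suppOf (b (Fin.castLE (by omega) i)), keyLE (Finsupp.single i 1, (0 : ℤ)) q) ∧
    ((Finsupp.single (⟨n - 1, by omega⟩ : Fin n) 1, (0 : ℤ)) ∈ suppOf (b ⟨k - 1, by omega⟩) ∧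
      ∀ q ∈ suppOf (b ⟨k - 1, by omega⟩),
        keyLE (Finsupp.single (⟨n - 1, by omega⟩ : Fin n) 1, (0 : ℤ)) q) := by
  classical
  have hnk : n ≤ k := by omega
  -- each bᵢ has poles no worse than t^{-|α|}
  have hGood : ∀ i : Fin k, Lemma41.Good (b i) := by
    intro i α m hm
    have h := hsupp i α (m + ((∑ l, α l : ℕ) : ℤ))
      (show m + ((Lemma41.deg α : ℕ) : ℤ) < 0 by omega)
    rwa [HahnSeries.coeff_single_mul_add, one_mul] at h
  -- the weight-zero parts
  set β : Fin k → MvPowerSeries (Fin n) (MvPowerSeries (Fin s) K) :=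
    fun i => Lemma41.W0 (b i) with hβdef
  -- constant coefficients of the bᵢ vanish
  have hc0 : ∀ i : Fin k,
      MvPowerSeries.coeff 0 (b i) = 0 := by
    intro i
    by_cases hi : (i : ℕ) < n
    · exact (hlin ⟨(i : ℕ), hi⟩).1
    · have h2 := i.isLt
      have hieq : i = ⟨k - 1, by omega⟩ := Fin.ext (show (i : ℕ) = k - 1 by omega)
      rw [hieq, hsum, map_neg, map_sum]
      rw [Finset.sum_eq_zero fun j _ => (hlin j).1, neg_zero]
  have hβ0 : ∀ i : Fin k, β i 0 = 0 := by
    intro i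
    show (MvPowerSeries.coeff 0
      (b i)).coeff (-(Lemma41.deg (0 : Fin n →₀ ℕ) : ℤ)) = 0
    rw [hc0 i]
    exact HahnSeries.coeff_zero
  -- the elementary symmetric functions of the weight-zero parts vanish
  have hesym0 : ∀ j, 1 ≤ j → j ≤ k → esym β j = 0 := by
    intro j hj1 hjk
    have hWe : esym β j = Lemma41.W0 (esym b j) := by
      rw [esym, esym, Lemma41.W0_sum]
      exact (Finset.sum_congr rfl fun T _ => (Lemma41.good_prod_W0 b hGood T).2).symm
    funext α
    by_cases hα : α = 0
    · subst hα
      have hz : MvPowerSeries.constantCoeff (esym β j) = 0 := by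
        rw [esym, map_sum]
        refine Finset.sum_eq_zero fun T hT => ?_
        rw [map_prod]
        have hcard : T.card = j := (Finset.mem_powersetCard.mp hT).2
        obtain ⟨i, hi⟩ : T.Nonempty := Finset.card_pos.mp (by omega)
        refine Finset.prod_eq_zero hi ?_
        rw [← MvPowerSeries.coeff_zero_eq_constantCoeff_apply, MvPowerSeries.coeff_apply]
        exact hβ0 i
      rw [← MvPowerSeries.coeff_zero_eq_constantCoeff_apply, MvPowerSeries.coeff_apply] at hz
      exact hz
    · show (esym β j) α = (0 : MvPowerSeries (Fin n) (MvPowerSeries (Fin s) K)) α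
      rw [hWe]
      show (MvPowerSeries.coeff α
        (esym b j)).coeff (-(Lemma41.deg α : ℤ)) =
        (0 : MvPowerSeries (Fin n) (MvPowerSeries (Fin s) K)) α
      have hd : 0 < Lemma41.deg α := Nat.pos_of_ne_zero fun h => hα (Lemma41.deg_eq_zero h)
      exact hesymm j hj1 hjk α (-(Lemma41.deg α : ℤ)) (by omega)
  -- hence each weight-zero part is nilpotent, hence zero
  have hβzero : ∀ i : Fin k, β i = 0 := by
    intro m
    have hpow := Lemma41.pow_eq_zero_of_esym (show k ≠ 0 by omega) β hesym0 m
    exact (pow_eq_zero_iff (show k ≠ 0 by omega)).mp hpow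
  have hWzero : ∀ (i : Fin k) (α : Fin n →₀ ℕ),
      (MvPowerSeries.coeff α (b i)).coeff
        (-(Lemma41.deg α : ℤ)) = 0 :=
    fun i α => congrFun (hβzero i) α
  -- coefficients at the basis monomials
  have hcoeffk : ∀ j : Fin n,
      MvPowerSeries.coeff (Finsupp.single j 1)
        (b ⟨k - 1, by omega⟩) = -1 := by
    intro j
    rw [hsum, map_neg, map_sum]
    rw [Finset.sum_congr rfl fun i _ => (hlin i).2 j]
    rw [Finset.sum_ite_eq Finset.univ j
      (fun _ => (1 : LaurentSeries (MvPowerSeries (Fin s) K))), if_pos (Finset.mem_univ j)]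
  refine ⟨fun i => ⟨?_, ?_⟩, ?_, ?_⟩
  · show (MvPowerSeries.coeff (Finsupp.single i 1)
      (b (Fin.castLE (by omega) i))).coeff 0 ≠ 0
    rw [(hlin i).2 i, if_pos rfl, HahnSeries.coeff_one, if_pos rfl]
    exact one_ne_zero
  · refine Lemma41.minimal_supp _ (hGood _) (hWzero _) (hc0 _) i ?_
    intro j hj
    rw [(hlin i).2 j] at hj
    by_cases hji : j = i
    · subst hji
      exact Or.inl rfl
    · rw [if_neg hji] at hj
      exact (hj HahnSeries.coeff_zero).elim
  · show (MvPowerSeries.coeff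
      (Finsupp.single (⟨n - 1, by omega⟩ : Fin n) 1) (b ⟨k - 1, by omega⟩)).coeff 0 ≠ 0
    rw [hcoeffk]
    rw [show ((-1 : LaurentSeries (MvPowerSeries (Fin s) K)).coeff 0)
      = -((1 : LaurentSeries (MvPowerSeries (Fin s) K)).coeff 0) from rfl]
    rw [HahnSeries.coeff_one, if_pos rfl]
    exact neg_ne_zero.mpr one_ne_zero
  · refine Lemma41.minimal_supp _ (hGood _) (hWzero _) (hc0 _) _ ?_
    intro j _
    by_cases hj : j = (⟨n - 1, by omega⟩ : Fin n)
    · exact Or.inl (by rw [hj])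
    · right
      have hjv : (j : ℕ) ≠ n - 1 := fun h => hj (Fin.ext h)
      have hjlt := j.isLt
      refine ⟨j, fun l hl => ?_, ?_⟩
      · have hlv : (l : ℕ) < (j : ℕ) := hl
        rw [Finsupp.single_apply, Finsupp.single_apply]
        rw [if_neg (show ¬((⟨n - 1, by omega⟩ : Fin n) = l) from fun h => by
          have := congrArg Fin.val h; simp at this; omega)]
        rw [if_neg (show ¬(j = l) from fun h => by
          have := congrArg Fin.val h; omega)]
      · rw [Finsupp.single_apply, Finsupp.single_apply]
        rw [if_neg (show ¬((⟨n - 1, by omega⟩ : Fin n) = j) from fun h => hj h.symm)]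
        rw [if_pos rfl]
        exact Nat.zero_lt_one
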